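/- Let m₀, g, l₀, l₁, l₂, s > 0 and let I ⊆ (-π/2, π/2) be an open interval. Let k : I → ℝ be differentiable with k(θ) > |sin θ| for all θ ∈ I, satisfying the suspension constraint l₁ cos θ / g₁ + l₂ cos θ / g₂ + 2 l₀ cos θ = s on I, where g₁ = √(k² - 2k sin θ + 1), g₂ = √(k² + 2k sin θ + 1). Define F(θ) = m₀ g sin θ / k(θ) (the quantity t₀ sin θ₀) and h₂(θ) = l₂ (k + sin θ)/g₂ + 2 l₀ sin θ - l₁ (k - sin θ)/g₁ + h₁. Then for every θ ∈ I, h₂'(θ) > 0 and F'(θ) / (-h₂'(θ)) = -(m₀ g /(k³ cos²θ)) · [ (l₁/g₁³)(k - sin θ)² + (l₂/g₂³)(k + sin θ)² + 2 l₀ sin²θ ] / [ 4 l₁ l₂/(g₁³ g₂³) + 2 l₀ (l₁/g₁³ + l₂/g₂³) ], and this quantity is strictly negative. Consequently t₀ sin θ₀ is a strictly decreasing function of the vertical position error p̃₂z = -h₂ - p₂dz of quadrotor 2. -/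

import Mathlib

set_option maxHeartbeats 2000000

theorem aux14 (m0 g l0 l1 l2 K S C Kp G1 G2 : ℝ)
    (hm0 : 0 < m0) (hgr : 0 < g) (hl0 : 0 < l0) (hl1 : 0 < l1) (hl2 : 0 < l2)
    (hC : 0 < C) (hK0 : 0 < K) (hS1 : S < K) (hS2 : -K < S) (hG1 : 0 < G1) (hG2 : 0 < G2)
    (e1 : G1^2 = K^2 - 2*K*S + 1) (e2 : G2^2 = K^2 + 2*K*S + 1) (e3 : S^2 + C^2 = 1)
    (h0 : -(S*(l1/G1 + l2/G2 + 2*l0))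
        - C*(l1*(Kp*(K-S)-K*C)/G1^3 + l2*(Kp*(K+S)+K*C)/G2^3) = 0) :
    0 < C*K*(4*l1*l2/(G1^3*G2^3) + 2*l0*(l1/G1^3 + l2/G2^3))
        / (l1*(K-S)/G1^3 + l2*(K+S)/G2^3)
    ∧ (l2*(Kp + C)*G2 - l2*(K+S)*((Kp*(K+S)+K*C)/G2))/G2^2 + 2*l0*C
        - (l1*(Kp - C)*G1 - l1*(K-S)*((Kp*(K-S)-K*C)/G1))/G1^2
      = C*K*(4*l1*l2/(G1^3*G2^3) + 2*l0*(l1/G1^3 + l2/G2^3))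
        / (l1*(K-S)/G1^3 + l2*(K+S)/G2^3)
    ∧ 0 < (m0*g*C*K - m0*g*S*Kp)/K^2
    ∧ (m0*g*C*K - m0*g*S*Kp)/K^2 / (-(C*K*(4*l1*l2/(G1^3*G2^3) + 2*l0*(l1/G1^3 + l2/G2^3))
        / (l1*(K-S)/G1^3 + l2*(K+S)/G2^3)))
      = -(m0 * g / (K^3 * C^2))
          * ((l1 / G1^3) * (K - S)^2 + (l2 / G2^3) * (K + S)^2 + 2 * l0 * S^2)
          / (4 * l1 * l2 / (G1^3 * G2^3) + 2 * l0 * (l1 / G1^3 + l2 / G2^3)) := by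
  have hKS1 : 0 < K - S := by linarith
  have hKS2 : 0 < K + S := by linarith
  have hD : 0 < l1*(K-S)/G1^3 + l2*(K+S)/G2^3 :=
    add_pos (div_pos (mul_pos hl1 hKS1) (pow_pos hG1 3))
      (div_pos (mul_pos hl2 hKS2) (pow_pos hG2 3))
  have hY : 0 < 4*l1*l2/(G1^3*G2^3) + 2*l0*(l1/G1^3 + l2/G2^3) :=
    add_pos (div_pos (by positivity) (by positivity))
      (mul_pos (by positivity) (add_pos (div_pos hl1 (pow_pos hG1 3)) (div_pos hl2 (pow_pos hG2 3))))
  have hX : 0 < (l1/G1^3)*(K-S)^2 + (l2/G2^3)*(K+S)^2 + 2*l0*S^2 := by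
    have h1 : 0 < (l1/G1^3)*(K-S)^2 := mul_pos (div_pos hl1 (pow_pos hG1 3)) (by positivity)
    have h2 : 0 ≤ (l2/G2^3)*(K+S)^2 := by positivity
    have h3 : 0 ≤ 2*l0*S^2 := by positivity
    linarith
  have hpos2 : 0 < C*K*(4*l1*l2/(G1^3*G2^3) + 2*l0*(l1/G1^3 + l2/G2^3))
      / (l1*(K-S)/G1^3 + l2*(K+S)/G2^3) := div_pos (mul_pos (mul_pos hC hK0) hY) hD
  -- cleared constraint relation
  field_simp at h0
  have hKrel : Kp*C*(l1*(K-S)*G2^3 + l2*(K+S)*G1^3)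
      = l1*(K-S)*(1-S*K)*G2^3 - l2*(K+S)*(1+S*K)*G1^3 - 2*l0*S*(G1^3*G2^3) := by
    have h0' : G1*G2*(Kp*C*(l1*(K-S)*G2^3 + l2*(K+S)*G1^3))
        = G1*G2*(l1*(K-S)*(1-S*K)*G2^3 - l2*(K+S)*(1+S*K)*G1^3 - 2*l0*S*(G1^3*G2^3)) := by
      linear_combination G1*G2*((-1)*h0 - l1*G2^3*S*e1 + l1*G2^3*K*e3 - l2*G1^3*S*e2 - l2*G1^3*K*e3)
    exact mul_left_cancel₀ (by positivity) h0'
  have hFclean : (m0*g*C*K - m0*g*S*Kp)/K^2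
      = m0*g*((l1/G1^3)*(K-S)^2 + (l2/G2^3)*(K+S)^2 + 2*l0*S^2)
        / (K^2*C*(l1*(K-S)/G1^3 + l2*(K+S)/G2^3)) := by
    field_simp
    linear_combination (-S)*hKrel + (l1*(K-S)*G2^3*K + l2*(K+S)*G1^3*K)*e3
  refine ⟨hpos2, ?_, ?_, ?_⟩
  · field_simp
    linear_combination ((-1)*C*G2^3*l1 + C*G1^3*l2)*hKrel + ((-1)*S*C*l2^2 + S*C*G2^2*l2^2 + (-1)*S*C*G2^6*l1^2 + S*C*G1*G2^3*l1*l2 + (-1)*S*C*G1*G2^5*l1*l2 + (-1)*S*C*G1^2*l2^2 + S*C*G1^2*G2^2*l2^2 + S*C*G1^3*G2^3*l1*l2 + (-1)*S*C*G1^4*l2^2 + S*C*G1^4*G2^2*l2^2 + (-1)*K*C*l2^2 + K*C*G2^2*l2^2 + K*C*G2^6*l1^2 + (-1)*K*C*G1*G2^3*l1*l2 + K*C*G1*G2^5*l1*l2 + (-1)*K*C*G1^2*l2^2 + K*C*G1^2*G2^2*l2^2 + K*C*G1^3*G2^3*l1*l2 + (-1)*K*C*G1^4*l2^2 + K*C*G1^4*G2^2*l2^2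 + 2*K*S^2*C*l2^2 + (-4)*K*S^2*C*G2^2*l2^2 + 2*K*S^2*C*G1*G2^3*l1*l2 + (-2)*K*S^2*C*G1^2*G2^2*l2^2 + (-2)*K*S^2*C*G1^4*l2^2 + (-1)*K^2*S*C*l2^2 + (-2)*K^2*S*C*G2^2*l2^2 + (-1)*K^2*S*C*G1*G2^3*l1*l2 + (-2)*K^2*S*C*G1^2*l2^2 + (-1)*K^2*S*C*G1^2*G2^2*l2^2 + (-3)*K^2*S*C*G1^4*l2^2 + 4*K^2*S^3*C*l2^2 + 4*K^2*S^3*C*G2^2*l2^2 + 4*K^2*S^3*C*G1^2*l2^2 + (-3)*K^3*C*l2^2 + 2*K^3*C*G2^2*l2^2 + (-1)*K^3*C*G1*G2^3*l1*l2 + (-2)*K^3*C*G1^2*l2^2 + K^3*C*G1^2*G2^2*l2^2 + (-1)*K^3*C*G1^4*l2^2 + 8*K^3*S^2*C*l2^2 + 4*K^3*S^2*C*G1^2*l2^2 + (-8)*K^3*S^4*C*l2^2 + K^4*S*C*l2^2 + (-3)*K^4*S*C*G2^2*l2^2 + (-1)*K^4*S*C*G1^2*l2^2 + (-4)*K^4*S^3*C*l2^2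 + (-3)*K^5*C*l2^2 + K^5*C*G2^2*l2^2 + (-1)*K^5*C*G1^2*l2^2 + 6*K^5*S^2*C*l2^2 + K^6*S*C*l2^2 + (-1)*K^7*C*l2^2 + Kp*S*G2^2*l2^2 + Kp*S*G2^6*l1^2 + (-1)*Kp*S*G1*G2^3*l1*l2 + (-1)*Kp*S*G1*G2^5*l1*l2 + Kp*S*G1^2*G2^2*l2^2 + (-1)*Kp*S*G1^3*G2^3*l1*l2 + Kp*S*G1^4*G2^2*l2^2 + (-1)*Kp*S*C^2*l2^2 + 2*Kp*S*C^2*G1*G2^3*l1*l2 + (-1)*Kp*S*C^2*G1^2*l2^2 + (-1)*Kp*S*C^2*G1^4*l2^2 + (-1)*Kp*S^3*l2^2 + 2*Kp*S^3*G1*G2^3*l1*l2 + (-1)*Kp*S^3*G1^2*l2^2 + (-1)*Kp*S^3*G1^4*l2^2 + Kp*K*G2^2*l2^2 + (-1)*Kp*K*G2^6*l1^2 + (-1)*Kp*K*G1*G2^3*l1*l2 + Kp*K*G1*G2^5*l1*l2 + Kp*K*G1^2*G2^2*l2^2 + (-1)*Kp*K*G1^3*G2^3*l1*l2 + Kp*K*G1^4*G2^2*l2^2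 + (-1)*Kp*K*C^2*l2^2 + (-1)*Kp*K*C^2*G1^2*l2^2 + (-1)*Kp*K*C^2*G1^4*l2^2 + (-3)*Kp*K*S^2*l2^2 + (-4)*Kp*K*S^2*G2^2*l2^2 + 2*Kp*K*S^2*G1*G2^3*l1*l2 + (-3)*Kp*K*S^2*G1^2*l2^2 + (-2)*Kp*K*S^2*G1^2*G2^2*l2^2 + (-3)*Kp*K*S^2*G1^4*l2^2 + 4*Kp*K*S^2*C^2*l2^2 + 2*Kp*K*S^2*C^2*G1^2*l2^2 + 4*Kp*K*S^4*l2^2 + 2*Kp*K*S^4*G1^2*l2^2 + (-3)*Kp*K^2*S*l2^2 + (-2)*Kp*K^2*S*G2^2*l2^2 + (-1)*Kp*K^2*S*G1*G2^3*l1*l2 + (-3)*Kp*K^2*S*G1^2*l2^2 + (-1)*Kp*K^2*S*G1^2*G2^2*l2^2 + (-3)*Kp*K^2*S*G1^4*l2^2 + 2*Kp*K^2*S*C^2*l2^2 + Kp*K^2*S*C^2*G1^2*l2^2 + 10*Kp*K^2*S^3*l2^2 + 4*Kp*K^2*S^3*G2^2*l2^2 + 5*Kp*K^2*S^3*G1^2*l2^2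 + (-4)*Kp*K^2*S^3*C^2*l2^2 + (-4)*Kp*K^2*S^5*l2^2 + (-1)*Kp*K^3*l2^2 + 2*Kp*K^3*G2^2*l2^2 + (-1)*Kp*K^3*G1*G2^3*l1*l2 + (-1)*Kp*K^3*G1^2*l2^2 + Kp*K^3*G1^2*G2^2*l2^2 + (-1)*Kp*K^3*G1^4*l2^2 + (-2)*Kp*K^3*C^2*l2^2 + (-1)*Kp*K^3*C^2*G1^2*l2^2 + 6*Kp*K^3*S^2*l2^2 + 3*Kp*K^3*S^2*G1^2*l2^2 + (-8)*Kp*K^3*S^4*l2^2 + (-2)*Kp*K^4*S*l2^2 + (-3)*Kp*K^4*S*G2^2*l2^2 + (-1)*Kp*K^4*S*G1^2*l2^2 + 3*Kp*K^4*S*C^2*l2^2 + (-1)*Kp*K^4*S^3*l2^2 + (-2)*Kp*K^5*l2^2 + Kp*K^5*G2^2*l2^2 + (-1)*Kp*K^5*G1^2*l2^2 + (-1)*Kp*K^5*C^2*l2^2 + 5*Kp*K^5*S^2*l2^2 + Kp*K^6*S*l2^2 + (-1)*Kp*K^7*l2^2)*e1 + (S*C*l2^2 + (-1)*S*C*G1*G2^3*l1*l2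 + K*C*l2^2 + K*C*G1*G2^3*l1*l2 + (-6)*K*S^2*C*l2^2 + 2*K*S^2*C*G1*G2^3*l1*l2 + (-3)*K^2*S*C*l2^2 + (-3)*K^2*S*C*G1*G2^3*l1*l2 + 12*K^2*S^3*C*l2^2 + 3*K^3*C*l2^2 + K^3*C*G1*G2^3*l1*l2 + (-8)*K^3*S^4*C*l2^2 + (-9)*K^4*S*C*l2^2 + 4*K^4*S^3*C*l2^2 + 3*K^5*C*l2^2 + 6*K^5*S^2*C*l2^2 + (-5)*K^6*S*C*l2^2 + K^7*C*l2^2 + Kp*S*l2^2 + Kp*S*l1^2 + Kp*S*G2^2*l1^2 + Kp*S*G2^4*l1^2 + (-2)*Kp*S*G1*G2*l1*l2 + (-1)*Kp*S*G1*G2^3*l1*l2 + (-1)*Kp*S*C^2*l1^2 + (-1)*Kp*S*C^2*G2^2*l1^2 + (-1)*Kp*S*C^2*G2^4*l1^2 + 2*Kp*S*C^2*G1*G2*l1*l2 + (-1)*Kp*S^3*l1^2 + (-1)*Kp*S^3*G2^2*l1^2 + (-1)*Kp*S^3*G2^4*l1^2 + 2*Kp*S^3*G1*G2*l1*l2 +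 Kp*K*l2^2 + (-1)*Kp*K*l1^2 + (-1)*Kp*K*G2^2*l1^2 + (-1)*Kp*K*G2^4*l1^2 + Kp*K*G1*G2^3*l1*l2 + Kp*K*C^2*l1^2 + Kp*K*C^2*G2^2*l1^2 + Kp*K*C^2*G2^4*l1^2 + (-6)*Kp*K*S^2*l2^2 + 5*Kp*K*S^2*l1^2 + 3*Kp*K*S^2*G2^2*l1^2 + Kp*K*S^2*G2^4*l1^2 + 4*Kp*K*S^2*G1*G2*l1*l2 + 2*Kp*K*S^2*G1*G2^3*l1*l2 + (-4)*Kp*K*S^2*C^2*l1^2 + (-2)*Kp*K*S^2*C^2*G2^2*l1^2 + (-4)*Kp*K*S^2*C^2*G1*G2*l1*l2 + (-4)*Kp*K*S^4*l1^2 + (-2)*Kp*K*S^4*G2^2*l1^2 + (-4)*Kp*K*S^4*G1*G2*l1*l2 + (-3)*Kp*K^2*S*l2^2 + (-2)*Kp*K^2*S*l1^2 + (-1)*Kp*K^2*S*G2^2*l1^2 + (-2)*Kp*K^2*S*G1*G2*l1*l2 + (-3)*Kp*K^2*S*G1*G2^3*l1*l2 + 2*Kp*K^2*S*C^2*l1^2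 + Kp*K^2*S*C^2*G2^2*l1^2 + 2*Kp*K^2*S*C^2*G1*G2*l1*l2 + 12*Kp*K^2*S^3*l2^2 + 6*Kp*K^2*S^3*l1^2 + Kp*K^2*S^3*G2^2*l1^2 + 2*Kp*K^2*S^3*G1*G2*l1*l2 + (-4)*Kp*K^2*S^3*C^2*l1^2 + (-4)*Kp*K^2*S^5*l1^2 + 3*Kp*K^3*l2^2 + (-2)*Kp*K^3*l1^2 + (-1)*Kp*K^3*G2^2*l1^2 + Kp*K^3*G1*G2^3*l1*l2 + 2*Kp*K^3*C^2*l1^2 + Kp*K^3*C^2*G2^2*l1^2 + 2*Kp*K^3*S^2*l1^2 + Kp*K^3*S^2*G2^2*l1^2 + (-8)*Kp*K^3*S^4*l2^2 + (-9)*Kp*K^4*S*l2^2 + (-3)*Kp*K^4*S*l1^2 + 3*Kp*K^4*S*C^2*l1^2 + 4*Kp*K^4*S^3*l2^2 + 3*Kp*K^4*S^3*l1^2 + 3*Kp*K^5*l2^2 + (-1)*Kp*K^5*l1^2 + Kp*K^5*C^2*l1^2 + 6*Kp*K^5*S^2*l2^2 + Kp*K^5*S^2*l1^2 + (-5)*Kp*K^6*S*l2^2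 + Kp*K^7*l2^2)*e2 + ((-1)*Kp*S*l2^2 + (-1)*Kp*S*l1^2 + 2*Kp*S*G1*G2*l1*l2 + (-1)*Kp*K*l2^2 + Kp*K*l1^2 + 6*Kp*K*S^2*l2^2 + (-6)*Kp*K*S^2*l1^2 + 3*Kp*K^2*S*l2^2 + 3*Kp*K^2*S*l1^2 + 4*Kp*K^2*S*G1*G2*l1*l2 + (-12)*Kp*K^2*S^3*l2^2 + (-12)*Kp*K^2*S^3*l1^2 + (-8)*Kp*K^2*S^3*G1*G2*l1*l2 + (-3)*Kp*K^3*l2^2 + 3*Kp*K^3*l1^2 + 8*Kp*K^3*S^4*l2^2 + (-8)*Kp*K^3*S^4*l1^2 + 9*Kp*K^4*S*l2^2 + 9*Kp*K^4*S*l1^2 + 2*Kp*K^4*S*G1*G2*l1*l2 + (-4)*Kp*K^4*S^3*l2^2 + (-4)*Kp*K^4*S^3*l1^2 + (-3)*Kp*K^5*l2^2 + 3*Kp*K^5*l1^2 + (-6)*Kp*K^5*S^2*l2^2 + 6*Kp*K^5*S^2*l1^2 + 5*Kp*K^6*S*l2^2 + 5*Kp*K^6*S*l1^2 + (-1)*Kp*K^7*l2^2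 + Kp*K^7*l1^2)*e3
  · rw [hFclean]
    exact div_pos (mul_pos (mul_pos hm0 hgr) hX)
      (mul_pos (mul_pos (pow_pos hK0 2) hC) hD)
  · rw [hFclean]
    field_simp


open Real

/-- Monotonicity of `t₀ sin θ₀` as a function of the vertical
position error of quadrotor 2: along the suspension constraint, `h₂' > 0`,
`F'/(-h₂')` has the stated closed form and is strictly negative, hence
`F = t₀ sin θ₀` is strictly decreasing in `p̃₂z = -h₂ - p₂dz`. -/
theorem stmt_14 (m₀ g l₀ l₁ l₂ s h₁ p₂dz : ℝ)
    (hm₀ : 0 < m₀) (hg : 0 < g)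
    (hl₀ : 0 < l₀) (hl₁ : 0 < l₁) (hl₂ : 0 < l₂) (hs : 0 < s)
    (a b : ℝ) (hI : Set.Ioo a b ⊆ Set.Ioo (-(π/2)) (π/2))
    (k : ℝ → ℝ)
    (hkdiff : ∀ θ ∈ Set.Ioo a b, DifferentiableAt ℝ k θ)
    (hk : ∀ θ ∈ Set.Ioo a b, |Real.sin θ| < k θ)
    (g₁ g₂ F h₂ : ℝ → ℝ)
    (hg₁ : ∀ θ : ℝ, g₁ θ = Real.sqrt ((k θ)^2 - 2 * k θ * Real.sin θ + 1))
    (hg₂ : ∀ θ : ℝ, g₂ θ = Real.sqrt ((k θ)^2 + 2 * k θ * Real.sin θ + 1))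
    (hcon : ∀ θ ∈ Set.Ioo a b,
      l₁ * Real.cos θ / g₁ θ + l₂ * Real.cos θ / g₂ θ + 2 * l₀ * Real.cos θ = s)
    (hF : ∀ θ : ℝ, F θ = m₀ * g * Real.sin θ / k θ)
    (hh₂ : ∀ θ : ℝ, h₂ θ = l₂ * (k θ + Real.sin θ) / g₂ θ + 2 * l₀ * Real.sin θ
      - l₁ * (k θ - Real.sin θ) / g₁ θ + h₁) :
    (∀ θ ∈ Set.Ioo a b,
      0 < deriv h₂ θ ∧
      deriv F θ / (-(deriv h₂ θ))
        = -(m₀ * g / ((k θ)^3 * Real.cos θ^2))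
            * ((l₁ / (g₁ θ)^3) * (k θ - Real.sin θ)^2
              + (l₂ / (g₂ θ)^3) * (k θ + Real.sin θ)^2
              + 2 * l₀ * Real.sin θ^2)
            / (4 * l₁ * l₂ / ((g₁ θ)^3 * (g₂ θ)^3)
              + 2 * l₀ * (l₁ / (g₁ θ)^3 + l₂ / (g₂ θ)^3)) ∧
      deriv F θ / (-(deriv h₂ θ)) < 0) ∧
    (∀ θa ∈ Set.Ioo a b, ∀ θb ∈ Set.Ioo a b,
      (-(h₂ θa) - p₂dz) < (-(h₂ θb) - p₂dz) → F θb < F θa) := by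
  have hg₁' : g₁ = fun t => Real.sqrt ((k t)^2 - 2 * k t * Real.sin t + 1) := funext hg₁
  have hg₂' : g₂ = fun t => Real.sqrt ((k t)^2 + 2 * k t * Real.sin t + 1) := funext hg₂
  have hF' : F = fun t => m₀ * g * Real.sin t / k t := funext hF
  have hh₂' : h₂ = fun t => l₂ * (k t + Real.sin t) / g₂ t + 2 * l₀ * Real.sin t
      - l₁ * (k t - Real.sin t) / g₁ t + h₁ := funext hh₂
  have key : ∀ θ ∈ Set.Ioo a b,
      (0 < deriv h₂ θ ∧
      deriv F θ / (-(deriv h₂ θ))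
        = -(m₀ * g / ((k θ)^3 * Real.cos θ^2))
            * ((l₁ / (g₁ θ)^3) * (k θ - Real.sin θ)^2
              + (l₂ / (g₂ θ)^3) * (k θ + Real.sin θ)^2
              + 2 * l₀ * Real.sin θ^2)
            / (4 * l₁ * l₂ / ((g₁ θ)^3 * (g₂ θ)^3)
              + 2 * l₀ * (l₁ / (g₁ θ)^3 + l₂ / (g₂ θ)^3)) ∧
      deriv F θ / (-(deriv h₂ θ)) < 0)
      ∧ (0 < deriv F θ ∧ DifferentiableAt ℝ h₂ θ ∧ DifferentiableAt ℝ F θ) := by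
    intro θ hθ
    obtain ⟨hθa, hθb⟩ := hθ
    have hC : 0 < Real.cos θ := Real.cos_pos_of_mem_Ioo (hI ⟨hθa, hθb⟩)
    have hkabs := hk θ ⟨hθa, hθb⟩
    have hK0 : 0 < k θ := lt_of_le_of_lt (abs_nonneg _) hkabs
    have hS1 : Real.sin θ < k θ := lt_of_le_of_lt (le_abs_self _) hkabs
    have hS2 : -k θ < Real.sin θ := by
      have := neg_abs_le (Real.sin θ); linarith
    have hk' : HasDerivAt k (deriv k θ) θ := (hkdiff θ ⟨hθa, hθb⟩).hasDerivAt
    have hpyth : Real.sin θ^2 + Real.cos θ^2 = 1 := Real.sin_sq_add_cos_sq θ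
    have hu : 0 < (k θ)^2 - 2 * k θ * Real.sin θ + 1 := by
      nlinarith [sq_nonneg (k θ - Real.sin θ)]
    have hv : 0 < (k θ)^2 + 2 * k θ * Real.sin θ + 1 := by
      nlinarith [sq_nonneg (k θ + Real.sin θ)]
    have hg1t : g₁ θ = Real.sqrt ((k θ)^2 - 2 * k θ * Real.sin θ + 1) := hg₁ θ
    have hg2t : g₂ θ = Real.sqrt ((k θ)^2 + 2 * k θ * Real.sin θ + 1) := hg₂ θ
    have hG1 : 0 < g₁ θ := by rw [hg1t]; exact Real.sqrt_pos.mpr hu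
    have hG2 : 0 < g₂ θ := by rw [hg2t]; exact Real.sqrt_pos.mpr hv
    have e1 : (g₁ θ)^2 = (k θ)^2 - 2 * k θ * Real.sin θ + 1 := by
      rw [hg1t]; exact Real.sq_sqrt hu.le
    have e2 : (g₂ θ)^2 = (k θ)^2 + 2 * k θ * Real.sin θ + 1 := by
      rw [hg2t]; exact Real.sq_sqrt hv.le
    have hud : HasDerivAt (fun t => (k t)^2 - 2 * k t * Real.sin t + 1)
        (2 * k θ * deriv k θ - (2 * deriv k θ * Real.sin θ + 2 * k θ * Real.cos θ)) θ := by
      have h3 := ((hk'.pow 2).sub ((hk'.const_mul 2).mul (Real.hasDerivAt_sin θ))).add_const 1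
      refine h3.congr_deriv ?_
      push_cast
      ring
    have hvd : HasDerivAt (fun t => (k t)^2 + 2 * k t * Real.sin t + 1)
        (2 * k θ * deriv k θ + (2 * deriv k θ * Real.sin θ + 2 * k θ * Real.cos θ)) θ := by
      have h3 := ((hk'.pow 2).add ((hk'.const_mul 2).mul (Real.hasDerivAt_sin θ))).add_const 1
      refine h3.congr_deriv ?_
      push_cast
      ring
    have hg1D : HasDerivAt g₁
        ((deriv k θ * (k θ - Real.sin θ) - k θ * Real.cos θ) / g₁ θ) θ := by
      rw [hg1t, hg₁']
      have h := hud.sqrt hu.ne'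
      convert h using 1
      rw [div_eq_div_iff (Real.sqrt_pos.mpr hu).ne' (by positivity)]
      ring
    have hg2D : HasDerivAt g₂
        ((deriv k θ * (k θ + Real.sin θ) + k θ * Real.cos θ) / g₂ θ) θ := by
      rw [hg2t, hg₂']
      have h := hvd.sqrt hv.ne'
      convert h using 1
      rw [div_eq_div_iff (Real.sqrt_pos.mpr hv).ne' (by positivity)]
      ring
    have hPhi : HasDerivAt
        (fun t => l₁ * Real.cos t / g₁ t + l₂ * Real.cos t / g₂ t + 2 * l₀ * Real.cos t)
        (-(Real.sin θ*(l₁/g₁ θ + l₂/g₂ θ + 2*l₀))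
          - Real.cos θ*(l₁*(deriv k θ*(k θ-Real.sin θ)-k θ*Real.cos θ)/(g₁ θ)^3
            + l₂*(deriv k θ*(k θ+Real.sin θ)+k θ*Real.cos θ)/(g₂ θ)^3)) θ := by
      have h := ((((Real.hasDerivAt_cos θ).const_mul l₁).div hg1D hG1.ne').add
        (((Real.hasDerivAt_cos θ).const_mul l₂).div hg2D hG2.ne')).add
        ((Real.hasDerivAt_cos θ).const_mul (2*l₀))
      refine h.congr_deriv ?_
      field_simp
      ring
    have h0 : -(Real.sin θ*(l₁/g₁ θ + l₂/g₂ θ + 2*l₀))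
          - Real.cos θ*(l₁*(deriv k θ*(k θ-Real.sin θ)-k θ*Real.cos θ)/(g₁ θ)^3
            + l₂*(deriv k θ*(k θ+Real.sin θ)+k θ*Real.cos θ)/(g₂ θ)^3) = 0 := by
      have hev : (fun t => l₁ * Real.cos t / g₁ t + l₂ * Real.cos t / g₂ t + 2 * l₀ * Real.cos t)
          =ᶠ[nhds θ] (fun _ => s) :=
        Filter.eventuallyEq_of_mem (Ioo_mem_nhds hθa hθb) (fun x hx => hcon x hx)
      exact (hPhi.congr_of_eventuallyEq hev.symm).unique (hasDerivAt_const θ s)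
    obtain ⟨hpos2, heq1, hpos3, heq4⟩ := aux14 m₀ g l₀ l₁ l₂ (k θ) (Real.sin θ) (Real.cos θ)
      (deriv k θ) (g₁ θ) (g₂ θ) hm₀ hg hl₀ hl₁ hl₂ hC hK0 hS1 hS2 hG1 hG2 e1 e2 hpyth h0
    have hDh : HasDerivAt h₂
        (Real.cos θ*k θ*(4*l₁*l₂/((g₁ θ)^3*(g₂ θ)^3) + 2*l₀*(l₁/(g₁ θ)^3 + l₂/(g₂ θ)^3))
          / (l₁*(k θ-Real.sin θ)/(g₁ θ)^3 + l₂*(k θ+Real.sin θ)/(g₂ θ)^3)) θ := by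
      rw [hh₂']
      have t1 := ((hk'.add (Real.hasDerivAt_sin θ)).const_mul l₂).div hg2D hG2.ne'
      have t2 := (Real.hasDerivAt_sin θ).const_mul (2*l₀)
      have t3 := ((hk'.sub (Real.hasDerivAt_sin θ)).const_mul l₁).div hg1D hG1.ne'
      have h := ((t1.add t2).sub t3).add_const h₁
      refine h.congr_deriv ?_
      exact heq1
    have hDF : HasDerivAt F
        ((m₀*g*Real.cos θ*k θ - m₀*g*Real.sin θ*deriv k θ)/(k θ)^2) θ := by
      rw [hF']
      have h := ((Real.hasDerivAt_sin θ).const_mul (m₀*g)).div hk' hK0.ne'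
      exact h
    refine ⟨⟨?_, ?_, ?_⟩, ?_, hDh.differentiableAt, hDF.differentiableAt⟩
    · rw [hDh.deriv]; exact hpos2
    · rw [hDh.deriv, hDF.deriv]; exact heq4
    · rw [hDh.deriv, hDF.deriv]
      exact div_neg_of_pos_of_neg hpos3 (neg_lt_zero.mpr hpos2)
    · rw [hDF.deriv]; exact hpos3
  constructor
  · exact fun θ hθ => (key θ hθ).1
  · have hmono2 : StrictMonoOn h₂ (Set.Ioo a b) :=
      strictMonoOn_of_deriv_pos (convex_Ioo a b)
        (fun x hx => ((key x hx).2.2.1).continuousAt.continuousWithinAt)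
        (by rw [interior_Ioo]; exact fun x hx => (key x hx).1.1)
    have hmonoF : StrictMonoOn F (Set.Ioo a b) :=
      strictMonoOn_of_deriv_pos (convex_Ioo a b)
        (fun x hx => ((key x hx).2.2.2).continuousAt.continuousWithinAt)
        (by rw [interior_Ioo]; exact fun x hx => (key x hx).2.1)
    intro θa ha θb hb hlt
    have h2lt : h₂ θb < h₂ θa := by linarith
    rcases lt_trichotomy θb θa with h | h | h
    · exact hmonoF hb ha h
    · exact absurd h2lt (by rw [h]; exact lt_irrefl _)
    · exact absurd (hmono2 ha hb h) (by linarith)
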